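/- Let H be a complex Hilbert space and A, B bounded selfadjoint operators on H with B indefinite. Suppose ⟨Ax, x⟩ ≥ 0 whenever ⟨Bx, x⟩ = 0. Define ρ₋ = −inf{⟨Ax,x⟩/⟨Bx,x⟩ : ⟨Bx,x⟩ > 0} and ρ₊ = −sup{⟨Ax,x⟩/⟨Bx,x⟩ : ⟨Bx,x⟩ < 0}. Then ρ₋ < +∞, ρ₊ > −∞, ρ₋ ≤ ρ₊, and for any real ρ, A + ρB is positive semidefinite if and only if ρ₋ ≤ ρ ≤ ρ₊. -/

import Mathlib

open scoped InnerProductSpace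

section Aux
variable {H : Type*} [NormedAddCommGroup H] [InnerProductSpace ℂ H] [CompleteSpace H]

lemma real_inner_self' {T : H →L[ℂ] H} (hT : IsSelfAdjoint T) (x : H) :
    (⟪T x, x⟫_ℂ) = ((⟪T x, x⟫_ℂ).re : ℂ) := by
  have h : ⟪T x, x⟫_ℂ = ⟪x, T x⟫_ℂ := hT.isSymmetric x x
  have hc : (starRingEnd ℂ) (⟪T x, x⟫_ℂ) = ⟪T x, x⟫_ℂ := by
    rw [inner_conj_symm]; exact h.symm
  have him : (⟪T x, x⟫_ℂ).im = 0 := Complex.conj_eq_iff_im.mp hc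
  simp [Complex.ext_iff, him]

lemma quad_expand {T : H →L[ℂ] H} (hT : IsSelfAdjoint T) (x y : H) (t : ℝ) :
    (⟪T (x + (t:ℂ) • y), x + (t:ℂ) • y⟫_ℂ).re
      = (⟪T x, x⟫_ℂ).re + 2*t*(⟪T y, x⟫_ℂ).re + t^2 * (⟪T y, y⟫_ℂ).re := by
  have hxy : ⟪T x, y⟫_ℂ = (starRingEnd ℂ) (⟪T y, x⟫_ℂ) := by
    rw [← inner_conj_symm]
    exact congrArg _ ((hT.isSymmetric y x).symm : ⟪y, T x⟫_ℂ = ⟪T y, x⟫_ℂ)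
  rw [map_add, map_smul, inner_add_left, inner_add_right, inner_add_right,
    inner_smul_left, inner_smul_right, inner_smul_left, inner_smul_right, hxy]
  simp [Complex.add_re, Complex.mul_re, Complex.conj_ofReal, Complex.ofReal_re,
    Complex.ofReal_im, Complex.conj_re, Complex.conj_im]
  have h2 : (⟪x, T y⟫_ℂ).re = (⟪T y, x⟫_ℂ).re := by
    rw [← inner_conj_symm, Complex.conj_re]
  rw [h2]; ring

lemma key_ineq {A B : H →L[ℂ] H} (hA : IsSelfAdjoint A) (hB : IsSelfAdjoint B)
    (hmap : ∀ x : H, ⟪B x, x⟫_ℂ = 0 → 0 ≤ (⟪A x, x⟫_ℂ).re)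
    {x y : H} (hx : 0 < (⟪B x, x⟫_ℂ).re) (hy : (⟪B y, y⟫_ℂ).re < 0) :
    (⟪A x, x⟫_ℂ).re * (⟪B y, y⟫_ℂ).re ≤ (⟪A y, y⟫_ℂ).re * (⟪B x, x⟫_ℂ).re := by
  set aX := (⟪A x, x⟫_ℂ).re with haX
  set aY := (⟪A y, y⟫_ℂ).re with haY
  set bX := (⟪B x, x⟫_ℂ).re with hbX
  set bY := (⟪B y, y⟫_ℂ).re with hbY
  set Rα := (⟪A y, x⟫_ℂ).re with hRα
  set Rβ := (⟪B y, x⟫_ℂ).re with hRβ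
  set s := Real.sqrt (Rβ^2 - bY * bX) with hs
  have hs2 : s^2 = Rβ^2 - bY * bX := Real.sq_sqrt (by nlinarith)
  have habs : |Rβ| < s := by
    have h1 : Rβ^2 < Rβ^2 - bY * bX := by nlinarith
    have := Real.sqrt_lt_sqrt (sq_nonneg Rβ) h1
    rwa [Real.sqrt_sq_eq_abs] at this
  have hR1 : Rβ < s := (le_abs_self Rβ).trans_lt habs
  have hR2 : -s < Rβ := by
    have := (neg_abs_le Rβ); linarith [habs]
  set t₁ := (-Rβ + s) / bY with ht₁def
  set t₂ := (-Rβ - s) / bY with ht₂def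
  have hbY0 : bY ≠ 0 := ne_of_lt hy
  have ht₁neg : t₁ < 0 := div_neg_of_pos_of_neg (by linarith) hy
  have ht₂pos : 0 < t₂ := div_pos_of_neg_of_neg (by linarith) hy
  have hroot : ∀ t : ℝ, bY * t^2 + 2*Rβ*t + bX = 0 →
      0 ≤ aX + 2*t*Rα + t^2*aY := by
    intro t ht
    have hb0 : (⟪B (x + (t:ℂ) • y), x + (t:ℂ) • y⟫_ℂ).re = 0 := by
      rw [quad_expand hB, ← hbX, ← hbY, ← hRβ]
      linarith [ht]
    have hbz : ⟪B (x + (t:ℂ) • y), x + (t:ℂ) • y⟫_ℂ = 0 := by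
      rw [real_inner_self' hB, hb0]; simp
    have := hmap _ hbz
    rwa [quad_expand hA, ← haX, ← hRα, ← haY] at this
  have hq1 : bY * t₁^2 + 2*Rβ*t₁ + bX = 0 := by
    rw [ht₁def]; field_simp; linear_combination hs2
  have hq2 : bY * t₂^2 + 2*Rβ*t₂ + bX = 0 := by
    rw [ht₂def]; field_simp; linear_combination hs2
  have h1 := hroot t₁ hq1
  have h2 := hroot t₂ hq2
  have p1 : 0 ≤ (-t₁) * (aX + 2*t₂*Rα + t₂^2*aY) := mul_nonneg (by linarith) h2
  have p2 : 0 ≤ t₂ * (aX + 2*t₁*Rα + t₁^2*aY) := mul_nonneg ht₂pos.le h1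
  have hsum : 0 ≤ (t₂ - t₁) * (aX - aY * (t₁ * t₂)) := by nlinarith [p1, p2]
  have hfin : aY * (t₁ * t₂) ≤ aX := by nlinarith [hsum, ht₁neg, ht₂pos]
  have hprod : t₁ * t₂ * bY = bX := by
    rw [ht₁def, ht₂def]; field_simp; linear_combination (-1 : ℝ) * hs2
  have h4 : aY * (t₁ * t₂) * bY = aY * bX := by rw [mul_assoc, hprod]
  linarith [mul_nonneg (by linarith : (0:ℝ) ≤ -bY) (by linarith : 0 ≤ aX - aY * (t₁ * t₂)), h4]

end Aux

/-- Corollary 2.2: the interval of admissible parameters `ρ` for which `A + ρB` is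
positive semidefinite is `[ρ₋, ρ₊]`, where
`ρ₋ = -inf { ⟨Ax,x⟩/⟨Bx,x⟩ : ⟨Bx,x⟩ > 0 }` and `ρ₊ = -sup { ⟨Ax,x⟩/⟨Bx,x⟩ : ⟨Bx,x⟩ < 0 }`. -/
theorem admissible_interval
    {H : Type*} [NormedAddCommGroup H] [InnerProductSpace ℂ H] [CompleteSpace H]
    (A B : H →L[ℂ] H) (hA : IsSelfAdjoint A) (hB : IsSelfAdjoint B)
    (hBpos : ∃ x : H, 0 < (⟪B x, x⟫_ℂ).re)
    (hBneg : ∃ x : H, (⟪B x, x⟫_ℂ).re < 0)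
    (hmap : ∀ x : H, ⟪B x, x⟫_ℂ = 0 → 0 ≤ (⟪A x, x⟫_ℂ).re) :
    BddBelow {r : ℝ | ∃ x : H, 0 < (⟪B x, x⟫_ℂ).re ∧
        r = (⟪A x, x⟫_ℂ).re / (⟪B x, x⟫_ℂ).re} ∧
    BddAbove {r : ℝ | ∃ x : H, (⟪B x, x⟫_ℂ).re < 0 ∧
        r = (⟪A x, x⟫_ℂ).re / (⟪B x, x⟫_ℂ).re} ∧
    -sInf {r : ℝ | ∃ x : H, 0 < (⟪B x, x⟫_ℂ).re ∧
        r = (⟪A x, x⟫_ℂ).re / (⟪B x, x⟫_ℂ).re} ≤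
      -sSup {r : ℝ | ∃ x : H, (⟪B x, x⟫_ℂ).re < 0 ∧
        r = (⟪A x, x⟫_ℂ).re / (⟪B x, x⟫_ℂ).re} ∧
    ∀ ρ : ℝ, (∀ x : H, 0 ≤ (⟪(A + (ρ : ℂ) • B) x, x⟫_ℂ).re) ↔
      (-sInf {r : ℝ | ∃ x : H, 0 < (⟪B x, x⟫_ℂ).re ∧
          r = (⟪A x, x⟫_ℂ).re / (⟪B x, x⟫_ℂ).re} ≤ ρ ∧
        ρ ≤ -sSup {r : ℝ | ∃ x : H, (⟪B x, x⟫_ℂ).re < 0 ∧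
          r = (⟪A x, x⟫_ℂ).re / (⟪B x, x⟫_ℂ).re}) := by
  set Sp := {r : ℝ | ∃ x : H, 0 < (⟪B x, x⟫_ℂ).re ∧
      r = (⟪A x, x⟫_ℂ).re / (⟪B x, x⟫_ℂ).re} with hSp
  set Sn := {r : ℝ | ∃ x : H, (⟪B x, x⟫_ℂ).re < 0 ∧
      r = (⟪A x, x⟫_ℂ).re / (⟪B x, x⟫_ℂ).re} with hSn
  obtain ⟨x₀, hx₀⟩ := hBpos
  obtain ⟨y₀, hy₀⟩ := hBneg
  have hSpne : Sp.Nonempty := ⟨_, x₀, hx₀, rfl⟩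
  have hSnne : Sn.Nonempty := ⟨_, y₀, hy₀, rfl⟩
  -- every element of Sn is ≤ every element of Sp
  have hle : ∀ r ∈ Sn, ∀ r' ∈ Sp, r ≤ r' := by
    rintro r ⟨y, hy, rfl⟩ r' ⟨x, hx, rfl⟩
    have hk := key_ineq hA hB hmap hx hy
    rw [show (⟪A y, y⟫_ℂ).re / (⟪B y, y⟫_ℂ).re
        = (-(⟪A y, y⟫_ℂ).re) / (-(⟪B y, y⟫_ℂ).re) from (neg_div_neg_eq _ _).symm,
      div_le_div_iff₀ (by linarith) hx]
    nlinarith [hk]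
  have hbddb : BddBelow Sp := ⟨_, fun r' hr' => hle _ (hSnne.some_mem) r' hr'⟩
  have hbdda : BddAbove Sn := ⟨_, fun r hr => hle r hr _ (hSpne.some_mem)⟩
  have hssup : sSup Sn ≤ sInf Sp :=
    csSup_le hSnne fun r hr => le_csInf hSpne fun r' hr' => hle r hr r' hr'
  refine ⟨hbddb, hbdda, by linarith, ?_⟩
  intro ρ
  have hquad : ∀ z : H, (⟪(A + (ρ : ℂ) • B) z, z⟫_ℂ).re
      = (⟪A z, z⟫_ℂ).re + ρ * (⟪B z, z⟫_ℂ).re := by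
    intro z
    rw [ContinuousLinearMap.add_apply, ContinuousLinearMap.smul_apply, inner_add_left,
      inner_smul_left, Complex.add_re, Complex.conj_ofReal, Complex.re_ofReal_mul]
  constructor
  · intro h
    constructor
    · rw [neg_le]
      refine le_csInf hSpne ?_
      rintro r ⟨x, hx, rfl⟩
      rw [le_div_iff₀ hx]
      have := h x
      rw [hquad x] at this
      linarith
    · rw [le_neg]
      refine csSup_le hSnne ?_
      rintro r ⟨x, hx, rfl⟩
      rw [div_le_iff_of_neg hx]
      have := h x
      rw [hquad x] at this
      linarith
  · rintro ⟨h1, h2⟩ x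
    rw [hquad x]
    rcases lt_trichotomy ((⟪B x, x⟫_ℂ).re) 0 with hbx | hbx | hbx
    · have hmem : (⟪A x, x⟫_ℂ).re / (⟪B x, x⟫_ℂ).re ∈ Sn := ⟨x, hbx, rfl⟩
      have := (le_csSup hbdda hmem).trans (by linarith [h2] : sSup Sn ≤ -ρ)
      rw [div_le_iff_of_neg hbx] at this
      linarith
    · have hz : ⟪B x, x⟫_ℂ = 0 := by
        rw [real_inner_self' hB, hbx]; simp
      have := hmap x hz
      rw [hbx]; linarith
    · have hmem : (⟪A x, x⟫_ℂ).re / (⟪B x, x⟫_ℂ).re ∈ Sp := ⟨x, hbx, rfl⟩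
      have h3 : -ρ ≤ (⟪A x, x⟫_ℂ).re / (⟪B x, x⟫_ℂ).re :=
        le_trans (by linarith [h1] : -ρ ≤ sInf Sp) (csInf_le hbddb hmem)
      rw [le_div_iff₀ hbx] at h3
      linarith
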